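/- Willems' fundamental lemma: let A ∈ ℝ^{n×n}, B ∈ ℝ^{n×m}, C ∈ ℝ^{ℓ×n}, D ∈ ℝ^{ℓ×m} with the pair (A,B) controllable, i.e., the matrix [B AB ⋯ A^{n−1}B] has rank n. Let (û(i), ŷ(i))_{i=0}^{N−1} be an input/output trajectory of the deterministic system x(k+1) = A x(k) + B u(k), y(k) = C x(k) + D u(k) (i.e., there exist states x̂(0),…,x̂(N) with x̂(i+1) = A x̂(i) + B û(i) and ŷ(i) = C x̂(i) + D û(i) for all 0 ≤ i ≤ N−1), and suppose the input signal û is persistently exciting of order n + K. Build the matrix 𝓗_K := col(Û_{0,K,N−K+1}, Ŷ_{0,K,N−K+1}) ∈ ℝ^{(m+ℓ)K × (N−K+1)} by stacking the depth-K Hankel matrices of û and ŷ. Then a pair (u, y) ∈ ℝ^{mK} × ℝ^{ℓK} is a K-long input/output trajectory of the system (i.e., there exist x(0),…,x(K) with x(k+1) = A x(k) + B u(k) and y(k) = C x(k) + D u(k) for 0 ≤ k ≤ K−1) if and only if col(u, y) lies in the column space of 𝓗_K. -/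

import Mathlib

/-- The depth-`K` (block-)Hankel matrix of a signal `z(0), …, z(N−1)` with values in
`ℝ^w`: its `((i,a), j)` entry is the `a`-th component of `z(i+j)`, for `0 ≤ i ≤ K−1`
and `0 ≤ j ≤ N−K`. -/
def hankelMatrix {w : ℕ} (K N : ℕ) (z : ℕ → Fin w → ℝ) :
    Matrix (Fin K × Fin w) (Fin (N - K + 1)) ℝ :=
  Matrix.of fun p j => z (p.1.1 + j.1) p.2

/-- The matrix `𝓗_K = col(Û_{0,K,N−K+1}, Ŷ_{0,K,N−K+1})` obtained by stacking the
depth-`K` Hankel matrices of the input signal `u` (values in `ℝ^m`) and of the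
output signal `y` (values in `ℝ^ℓ`). -/
def stackedHankel {m ℓ : ℕ} (K N : ℕ) (u : ℕ → Fin m → ℝ) (y : ℕ → Fin ℓ → ℝ) :
    Matrix ((Fin K × Fin m) ⊕ (Fin K × Fin ℓ)) (Fin (N - K + 1)) ℝ :=
  Matrix.of fun p j =>
    Sum.elim (fun q : Fin K × Fin m => u (q.1.1 + j.1) q.2)
             (fun q : Fin K × Fin ℓ => y (q.1.1 + j.1) q.2) p

open Matrix Finset

lemma aux_leftker {r c : Type*} [Fintype r] [Fintype c] (M : Matrix r c ℝ)
    (h : M.rank = Fintype.card r) : ∀ v : r → ℝ, M.vecMul v = 0 → v = 0 := by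
  intro v hv
  have hrk : Mᵀ.rank = Fintype.card r := by rw [Matrix.rank_transpose]; exact h
  have hker : LinearMap.ker Mᵀ.mulVecLin = ⊥ := by
    have := Mᵀ.mulVecLin.finrank_range_add_finrank_ker
    rw [Matrix.rank] at hrk
    have hd : Module.finrank ℝ (r → ℝ) = Fintype.card r := Module.finrank_pi ℝ
    rw [hd, hrk] at this
    have : Module.finrank ℝ (LinearMap.ker Mᵀ.mulVecLin) = 0 := by omega
    exact Submodule.finrank_eq_zero.mp this
  have : Mᵀ.mulVecLin v = 0 := by
    simp [Matrix.mulVecLin_apply, Matrix.mulVec_transpose, hv]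
  exact (LinearMap.ker_eq_bot.mp hker).eq_iff.mp (by simpa using this)

lemma aux_split_sum (L t K : ℕ) (h : t + K ≤ L) (f : ℕ → ℝ) (g : ℕ → ℕ → ℝ)
    (hg : ∀ k i, K ≤ k → g k i = 0) :
    ∑ i ∈ Finset.range L, (if i < t then f i else g (i - t) i)
      = (∑ i ∈ Finset.range t, f i) + ∑ k ∈ Finset.range K, g k (t + k) := by
  have h1 : ∑ i ∈ Finset.range L, (if i < t then f i else g (i - t) i)
      = ∑ i ∈ Finset.range t, (if i < t then f i else g (i - t) i)
        + ∑ i ∈ Finset.Ico t L, (if i < t then f i else g (i - t) i) := by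
    rw [Finset.range_eq_Ico, ← Finset.sum_Ico_consecutive _ (Nat.zero_le t) (by omega),
      Finset.range_eq_Ico]
  rw [h1]
  congr 1
  · exact Finset.sum_congr rfl fun i hi => by
      rw [if_pos (Finset.mem_range.mp hi)]
  · rw [Finset.sum_Ico_eq_sum_range]
    have h2 : ∀ i ∈ Finset.range (L - t),
        (if t + i < t then f (t+i) else g (t + i - t) (t + i)) = g i (t + i) := by
      intro i _; rw [if_neg (by omega)]; congr 2; omega
    rw [Finset.sum_congr rfl h2]
    symm
    apply Finset.sum_subset (Finset.range_subset_range.mpr (by omega))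
    intro k _ hk
    exact hg k (t+k) (by simp at hk ⊢; omega)


lemma aux_vecMul_smul {n p : ℕ} (x : Fin n → ℝ) (c : ℝ) (M : Matrix (Fin n) (Fin p) ℝ) :
    x ᵥ* (c • M) = c • (x ᵥ* M) := by
  funext j
  simp only [Matrix.vecMul, dotProduct, Matrix.smul_apply, smul_eq_mul, Pi.smul_apply,
    Finset.mul_sum]
  exact Finset.sum_congr rfl fun i _ => by ring

lemma aux_lincomb {n q : ℕ} (ξ : Fin n → ℝ) (w : Fin q → ℝ) (s : Finset ℕ) (c : ℕ → ℝ)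
    (M : ℕ → Matrix (Fin n) (Fin q) ℝ) :
    ∑ t ∈ s, c t * ((ξ ᵥ* M t) ⬝ᵥ w) = (ξ ᵥ* (∑ t ∈ s, c t • M t)) ⬝ᵥ w := by
  classical
  induction s using Finset.induction with
  | empty => simp
  | insert _ _ hx ih =>
    rw [Finset.sum_insert hx, Finset.sum_insert hx, ih, Matrix.vecMul_add,
      add_dotProduct, aux_vecMul_smul, smul_dotProduct, smul_eq_mul]

lemma aux_pe_kernel {n m N K : ℕ}
    (A : Matrix (Fin n) (Fin n) ℝ) (B : Matrix (Fin n) (Fin m) ℝ)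
    (hctrb : (Matrix.of fun (i : Fin n) (p : Fin n × Fin m) =>
        (A ^ (p.1 : ℕ) * B) i p.2).rank = n)
    (uh : ℕ → Fin m → ℝ) (xh : ℕ → Fin n → ℝ)
    (htraj : ∀ i < N, xh (i + 1) = A.mulVec (xh i) + B.mulVec (uh i))
    (hdepth : n + K ≤ N)
    (hPE : (hankelMatrix (n + K) N uh).rank = m * (n + K))
    (ξ : Fin n → ℝ) (η : ℕ → Fin m → ℝ)
    (hηz : ∀ k a, K ≤ k → η k a = 0)
    (hrel : ∀ s, s + K ≤ N →
      (ξ ⬝ᵥ xh s) + ∑ k ∈ Finset.range K, (η k) ⬝ᵥ uh (s + k) = 0) :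
    ξ = 0 ∧ ∀ k a, η k a = 0 := by
  classical
  -- Step A
  have stepA : ∀ t s : ℕ, s + t + K ≤ N →
      ((ξ ᵥ* (A ^ t)) ⬝ᵥ xh s)
        + (∑ p ∈ Finset.range t, (ξ ᵥ* (A ^ (t - 1 - p) * B)) ⬝ᵥ uh (s + p))
        + (∑ k ∈ Finset.range K, (η k) ⬝ᵥ uh (s + t + k)) = 0 := by
    intro t
    induction t with
    | zero =>
      intro s hs
      simpa [Matrix.vecMul_one] using hrel s (by omega)
    | succ t ih =>
      intro s hs
      have hsN : s < N := by omega
      have hxs : A.mulVec (xh s) = xh (s+1) - B.mulVec (uh s) := by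
        rw [htraj s hsN]; abel
      have e1 : (ξ ᵥ* A ^ (t+1)) ⬝ᵥ xh s
          = (ξ ᵥ* A ^ t) ⬝ᵥ xh (s+1) - (ξ ᵥ* (A ^ t * B)) ⬝ᵥ uh s := by
        rw [pow_succ, ← Matrix.vecMul_vecMul, ← Matrix.dotProduct_mulVec, hxs,
          dotProduct_sub, Matrix.dotProduct_mulVec, Matrix.vecMul_vecMul]
      have h2 : ∑ p ∈ Finset.range (t+1), (ξ ᵥ* (A ^ (t + 1 - 1 - p) * B)) ⬝ᵥ uh (s + p)
          = (∑ p ∈ Finset.range t, (ξ ᵥ* (A ^ (t - 1 - p) * B)) ⬝ᵥ uh (s + 1 + p))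
            + (ξ ᵥ* (A ^ t * B)) ⬝ᵥ uh s := by
        rw [Finset.sum_range_succ']
        congr 1
        apply Finset.sum_congr rfl
        intro p _
        have e2 : t + 1 - 1 - (p + 1) = t - 1 - p := by omega
        have e3 : s + (p + 1) = s + 1 + p := by omega
        rw [e2, e3]
      have h3 : ∑ k ∈ Finset.range K, (η k) ⬝ᵥ uh (s + (t+1) + k)
          = ∑ k ∈ Finset.range K, (η k) ⬝ᵥ uh (s + 1 + t + k) := by
        apply Finset.sum_congr rfl
        intro k _
        have : s + (t+1) + k = s + 1 + t + k := by omega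
        rw [this]
      rw [e1, h2, h3]
      have h4 := ih (s+1) (by omega)
      linarith [h4]
  -- Cayley–Hamilton
  set c : ℕ → ℝ := fun t => A.charpoly.coeff t with hc
  have hdeg : A.charpoly.natDegree = n := by
    rw [Matrix.charpoly_natDegree_eq_dim, Fintype.card_fin]
  have hCH : ∑ t ∈ Finset.range (n+1), c t • A ^ t = 0 := by
    have h := A.aeval_self_charpoly
    rwa [Polynomial.aeval_eq_sum_range, hdeg] at h
  have hc1 : c n = 1 := by
    have h := A.charpoly_monic
    rw [Polynomial.Monic.def, Polynomial.leadingCoeff, hdeg] at h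
    exact h
  -- the annihilator of the deep Hankel matrix
  have hrank : (hankelMatrix (n + K) N uh).rank = Fintype.card (Fin (n+K) × Fin m) := by
    rw [hPE]; simp [mul_comm]
  have hθcol : ∀ j : Fin (N - (n+K) + 1),
      ((fun q : Fin (n+K) × Fin m => ∑ t ∈ Finset.range (n+1), c t *
          (if (q.1 : ℕ) < t then (ξ ᵥ* (A ^ (t - 1 - (q.1:ℕ)) * B)) q.2
           else η ((q.1:ℕ) - t) q.2))
        ᵥ* (hankelMatrix (n+K) N uh)) j = 0 := by
    intro j
    have hj : (j:ℕ) + n + K ≤ N := by have := j.2; omega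
    have key : ∀ t ∈ Finset.range (n+1),
        (∑ q : Fin (n+K) × Fin m,
          (if ((q.1:ℕ)) < t then (ξ ᵥ* (A ^ (t-1-(q.1:ℕ)) * B)) q.2
           else η ((q.1:ℕ) - t) q.2) * uh ((q.1:ℕ) + (j:ℕ)) q.2)
        = -((ξ ᵥ* A ^ t) ⬝ᵥ xh (j:ℕ)) := by
      intro t ht
      have htn : t ≤ n := by simp at ht; omega
      rw [Fintype.sum_prod_type]
      have hinner : ∀ i : Fin (n+K),
          (∑ a, (if ((i:ℕ)) < t then (ξ ᵥ* (A^(t-1-(i:ℕ)) * B)) a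
                 else η ((i:ℕ)-t) a) * uh ((i:ℕ)+(j:ℕ)) a)
          = (if ((i:ℕ)) < t then (ξ ᵥ* (A^(t-1-(i:ℕ)) * B)) ⬝ᵥ uh ((i:ℕ)+(j:ℕ))
             else (η ((i:ℕ)-t)) ⬝ᵥ uh ((i:ℕ)+(j:ℕ))) := by
        intro i; by_cases h : (i:ℕ) < t <;> simp [h, dotProduct]
      rw [Finset.sum_congr rfl (fun i _ => hinner i)]
      rw [Fin.sum_univ_eq_sum_range (fun i =>
        if i < t then (ξ ᵥ* (A^(t-1-i) * B)) ⬝ᵥ uh (i+(j:ℕ))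
        else (η (i-t)) ⬝ᵥ uh (i+(j:ℕ))) (n+K)]
      rw [aux_split_sum (n+K) t K (by omega)
        (fun i => (ξ ᵥ* (A^(t-1-i) * B)) ⬝ᵥ uh (i+(j:ℕ)))
        (fun k i => (η k) ⬝ᵥ uh (i+(j:ℕ)))
        (fun k i hk => by simp [dotProduct, hηz k _ hk])]
      have hA := stepA t (j:ℕ) (by omega)
      have e1 : ∑ p ∈ Finset.range t, (ξ ᵥ* (A^(t-1-p) * B)) ⬝ᵥ uh (p+(j:ℕ))
          = ∑ p ∈ Finset.range t, (ξ ᵥ* (A^(t-1-p) * B)) ⬝ᵥ uh ((j:ℕ)+p) := by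
        apply Finset.sum_congr rfl; intro p _
        have : p + (j:ℕ) = (j:ℕ) + p := by omega
        rw [this]
      have e2 : ∑ k ∈ Finset.range K, (η k) ⬝ᵥ uh ((t+k)+(j:ℕ))
          = ∑ k ∈ Finset.range K, (η k) ⬝ᵥ uh ((j:ℕ)+t+k) := by
        apply Finset.sum_congr rfl; intro k _
        have : t + k + (j:ℕ) = (j:ℕ)+t+k := by omega
        rw [this]
      rw [e1, e2]
      linarith [hA]
    -- assemble
    show (∑ q : Fin (n+K) × Fin m, (∑ t ∈ Finset.range (n+1), c t *
          (if ((q.1:ℕ)) < t then (ξ ᵥ* (A ^ (t-1-(q.1:ℕ)) * B)) q.2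
           else η ((q.1:ℕ) - t) q.2)) * uh ((q.1:ℕ) + (j:ℕ)) q.2) = 0
    have step1 : ∀ q : Fin (n+K) × Fin m,
        (∑ t ∈ Finset.range (n+1), c t *
          (if ((q.1:ℕ)) < t then (ξ ᵥ* (A ^ (t-1-(q.1:ℕ)) * B)) q.2
           else η ((q.1:ℕ) - t) q.2)) * uh ((q.1:ℕ) + (j:ℕ)) q.2
        = ∑ t ∈ Finset.range (n+1), c t *
          ((if ((q.1:ℕ)) < t then (ξ ᵥ* (A ^ (t-1-(q.1:ℕ)) * B)) q.2
            else η ((q.1:ℕ) - t) q.2) * uh ((q.1:ℕ) + (j:ℕ)) q.2) := by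
      intro q
      rw [Finset.sum_mul]
      exact Finset.sum_congr rfl fun t _ => by ring
    rw [Finset.sum_congr rfl (fun q _ => step1 q), Finset.sum_comm]
    have step2 : ∀ t ∈ Finset.range (n+1),
        (∑ q : Fin (n+K) × Fin m, c t *
          ((if ((q.1:ℕ)) < t then (ξ ᵥ* (A ^ (t-1-(q.1:ℕ)) * B)) q.2
            else η ((q.1:ℕ) - t) q.2) * uh ((q.1:ℕ) + (j:ℕ)) q.2))
        = c t * -((ξ ᵥ* A ^ t) ⬝ᵥ xh (j:ℕ)) := by
      intro t ht
      rw [← Finset.mul_sum, key t ht]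
    rw [Finset.sum_congr rfl step2]
    have : ∑ t ∈ Finset.range (n+1), c t * -((ξ ᵥ* A ^ t) ⬝ᵥ xh (j:ℕ))
        = -((ξ ᵥ* (∑ t ∈ Finset.range (n+1), c t • A ^ t)) ⬝ᵥ xh (j:ℕ)) := by
      rw [← aux_lincomb, ← Finset.sum_neg_distrib]
      exact Finset.sum_congr rfl fun t _ => by ring
    rw [this, hCH]
    simp
  have hθzero := aux_leftker _ hrank _ (funext hθcol)
  have hθall : ∀ (i : Fin (n+K)) (a : Fin m),
      ∑ t ∈ Finset.range (n+1), c t *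
        (if (i:ℕ) < t then (ξ ᵥ* (A ^ (t - 1 - (i:ℕ)) * B)) a
         else η ((i:ℕ) - t) a) = 0 := fun i a => by
    simpa using congrFun hθzero (i, a)
  -- extract η = 0 (downward induction from the top block)
  have hη : ∀ d : ℕ, ∀ k a, K = k + d + 1 → η k a = 0 := by
    intro d
    induction d using Nat.strong_induction_on with
    | _ d ih =>
      intro k a hKk
      have hik : n + k < n + K := by omega
      have hθk := hθall ⟨n + k, hik⟩ a
      rw [Finset.sum_range_succ] at hθk
      have hothers : ∀ t ∈ Finset.range n, c t *
          (if ((⟨n+k, hik⟩ : Fin (n+K)):ℕ) < t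
           then (ξ ᵥ* (A ^ (t - 1 - ((⟨n+k, hik⟩ : Fin (n+K)):ℕ)) * B)) a
           else η (((⟨n+k, hik⟩ : Fin (n+K)):ℕ) - t) a) = 0 := by
        intro t htr
        have htn : t < n := Finset.mem_range.mp htr
        rw [if_neg (by simp; omega)]
        by_cases hbig : K ≤ n + k - t
        · rw [hηz _ a hbig, mul_zero]
        · have hlt : n + k - t < K := by omega
          rw [ih (K - (n+k-t) - 1) (by omega) (n+k-t) a (by omega), mul_zero]
      rw [Finset.sum_eq_zero hothers, zero_add, hc1, one_mul,
        if_neg (by simp)] at hθk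
      have : n + k - n = k := by omega
      rw [this] at hθk
      exact hθk
  have hηall : ∀ k a, η k a = 0 := by
    intro k a
    by_cases h : k < K
    · exact hη (K - k - 1) k a (by omega)
    · exact hηz k a (by omega)
  -- extract ξ (A^d B) = 0
  have hξB : ∀ d : ℕ, d < n → ∀ a, (ξ ᵥ* (A ^ d * B)) a = 0 := by
    intro d
    induction d using Nat.strong_induction_on with
    | _ d ih =>
      intro hd a
      have hik : n - 1 - d < n + K := by omega
      have hθk := hθall ⟨n - 1 - d, hik⟩ a
      rw [Finset.sum_range_succ] at hθk
      have hothers : ∀ t ∈ Finset.range n, c t *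
          (if ((⟨n-1-d, hik⟩ : Fin (n+K)):ℕ) < t
           then (ξ ᵥ* (A ^ (t - 1 - ((⟨n-1-d, hik⟩ : Fin (n+K)):ℕ)) * B)) a
           else η (((⟨n-1-d, hik⟩ : Fin (n+K)):ℕ) - t) a) = 0 := by
        intro t htr
        have htn : t < n := Finset.mem_range.mp htr
        by_cases h : n - 1 - d < t
        · rw [if_pos (by simpa using h)]
          rw [ih (t - 1 - (n-1-d)) (by omega) (by omega) a, mul_zero]
        · rw [if_neg (by simpa using h), hηall, mul_zero]
      rw [Finset.sum_eq_zero hothers, zero_add, hc1, one_mul,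
        if_pos (by simp; omega)] at hθk
      have : n - 1 - (n - 1 - d) = d := by omega
      rw [this] at hθk
      exact hθk
  have hξ0 : ξ = 0 := by
    apply aux_leftker (Matrix.of fun (i : Fin n) (p : Fin n × Fin m) =>
        (A ^ (p.1 : ℕ) * B) i p.2) (by rw [hctrb]; simp) ξ
    funext p
    have := hξB (p.1:ℕ) p.1.2 p.2
    simpa [Matrix.vecMul, dotProduct] using this
  exact ⟨hξ0, hηall⟩

lemma aux_surj {r c : Type*} [Fintype r] [Fintype c] (M : Matrix r c ℝ)
    (h : ∀ v : r → ℝ, M.vecMul v = 0 → v = 0) : Function.Surjective M.mulVec := by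
  have hinj : Function.Injective Mᵀ.mulVecLin := by
    rw [← LinearMap.ker_eq_bot, LinearMap.ker_eq_bot']
    intro v hv
    exact h v (by rw [← Matrix.mulVec_transpose]; exact hv)
  have hrkT : Mᵀ.rank = Fintype.card r := by
    rw [Matrix.rank, LinearMap.finrank_range_of_inj hinj, Module.finrank_pi]
  have hrk : M.rank = Fintype.card r := by rw [← Matrix.rank_transpose]; exact hrkT
  have hrange : LinearMap.range M.mulVecLin = ⊤ := by
    apply Submodule.eq_top_of_finrank_eq
    rw [← Matrix.rank] at *
    rw [hrk, Module.finrank_pi]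
  intro w
  obtain ⟨g, hg⟩ := LinearMap.range_eq_top.mp hrange w
  exact ⟨g, hg⟩

lemma aux_mulVec_comb {p q r : ℕ} (M : Matrix (Fin p) (Fin q) ℝ) (g : Fin r → ℝ)
    (v : Fin r → Fin q → ℝ) (i : Fin p) :
    M.mulVec (fun a => ∑ j, g j * v j a) i = ∑ j, g j * M.mulVec (v j) i := by
  simp only [Matrix.mulVec, dotProduct, Finset.mul_sum]
  rw [Finset.sum_comm]
  exact Finset.sum_congr rfl fun j _ => Finset.sum_congr rfl fun a _ => by ring

/-- Willems' fundamental lemma: let `(A,B,C,D)` define the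
deterministic LTI system `x(k+1) = A x(k) + B u(k)`, `y(k) = C x(k) + D u(k)`, with
`(A,B)` controllable (the controllability matrix `[B AB ⋯ A^{n−1}B]` has rank `n`).
Let `(uh(i), yh(i))_{i=0}^{N−1}` be an input/output trajectory of the system, produced
by some state trajectory `xh`, and suppose the input `uh` is persistently exciting of
order `n + K` (its depth-`(n+K)` Hankel matrix has full row rank `m(n+K)`). Then
`(u, y)` is a `K`-long input/output trajectory of the system (i.e. generated by some
state sequence) if and only if `col(u, y)` lies in the column space of
`𝓗_K = col(Û_{0,K,N−K+1}, Ŷ_{0,K,N−K+1})`. -/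
theorem willems_fundamental_lemma {n m ℓ N K : ℕ}
    (A : Matrix (Fin n) (Fin n) ℝ) (B : Matrix (Fin n) (Fin m) ℝ)
    (C : Matrix (Fin ℓ) (Fin n) ℝ) (D : Matrix (Fin ℓ) (Fin m) ℝ)
    (hctrb : (Matrix.of fun (i : Fin n) (p : Fin n × Fin m) =>
        (A ^ (p.1 : ℕ) * B) i p.2).rank = n)
    (uh : ℕ → Fin m → ℝ) (yh : ℕ → Fin ℓ → ℝ) (xh : ℕ → Fin n → ℝ)
    (htraj : ∀ i < N, xh (i + 1) = A.mulVec (xh i) + B.mulVec (uh i) ∧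
        yh i = C.mulVec (xh i) + D.mulVec (uh i))
    (hdepth : n + K ≤ N)
    (hPE : (hankelMatrix (n + K) N uh).rank = m * (n + K))
    (u : ℕ → Fin m → ℝ) (y : ℕ → Fin ℓ → ℝ) :
    (∃ x : ℕ → Fin n → ℝ, ∀ k < K,
        x (k + 1) = A.mulVec (x k) + B.mulVec (u k) ∧
        y k = C.mulVec (x k) + D.mulVec (u k)) ↔
    (∃ g : Fin (N - K + 1) → ℝ,
        (stackedHankel K N uh yh).mulVec g =
          Sum.elim (fun q : Fin K × Fin m => u q.1.1 q.2)
                   (fun q : Fin K × Fin ℓ => y q.1.1 q.2)) := by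
  have hlt : ∀ (k : ℕ), k < K → ∀ j : Fin (N-K+1), k + (j:ℕ) < N := by
    intro k hk j; have := j.2; omega
  have hcombx : ∀ g : Fin (N-K+1) → ℝ, ∀ k, k < K →
      (fun i => ∑ j, g j * xh (k+1+(j:ℕ)) i)
        = A.mulVec (fun i => ∑ j, g j * xh (k+(j:ℕ)) i)
          + B.mulVec (fun a => ∑ j, g j * uh (k+(j:ℕ)) a) := by
    intro g k hk
    funext i
    rw [Pi.add_apply, aux_mulVec_comb, aux_mulVec_comb, ← Finset.sum_add_distrib]
    apply Finset.sum_congr rfl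
    intro j _
    have h2 : k+1+(j:ℕ) = k + (j:ℕ) + 1 := by omega
    rw [h2, (htraj (k + (j:ℕ)) (hlt k hk j)).1]
    simp [mul_add]
  have hcomby : ∀ g : Fin (N-K+1) → ℝ, ∀ k, k < K →
      (fun b => ∑ j, g j * yh (k+(j:ℕ)) b)
        = C.mulVec (fun i => ∑ j, g j * xh (k+(j:ℕ)) i)
          + D.mulVec (fun a => ∑ j, g j * uh (k+(j:ℕ)) a) := by
    intro g k hk
    funext b
    rw [Pi.add_apply, aux_mulVec_comb, aux_mulVec_comb, ← Finset.sum_add_distrib]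
    apply Finset.sum_congr rfl
    intro j _
    rw [(htraj (k + (j:ℕ)) (hlt k hk j)).2]
    simp [mul_add]
  constructor
  · rintro ⟨x, hx⟩
    have hker : ∀ v : (Fin n ⊕ (Fin K × Fin m)) → ℝ,
        (Matrix.of fun p (j : Fin (N-K+1)) =>
          Sum.elim (fun i : Fin n => xh (j:ℕ) i)
            (fun q : Fin K × Fin m => uh ((q.1:ℕ) + (j:ℕ)) q.2) p).vecMul v = 0 →
        v = 0 := by
      intro v hv
      set ξ : Fin n → ℝ := fun i => v (Sum.inl i) with hξdef
      set η : ℕ → Fin m → ℝ :=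
        fun k a => if h : k < K then v (Sum.inr (⟨k, h⟩, a)) else 0 with hηdef
      have hηz : ∀ k a, K ≤ k → η k a = 0 := by
        intro k a hk
        rw [hηdef]
        exact dif_neg (by omega)
      have hrel : ∀ s, s + K ≤ N →
          (ξ ⬝ᵥ xh s) + ∑ k ∈ Finset.range K, (η k) ⬝ᵥ uh (s + k) = 0 := by
        intro s hs
        have hj : s < N - K + 1 := by omega
        have h := congrFun hv ⟨s, hj⟩
        simp only [Matrix.vecMul, dotProduct, Fintype.sum_sum_type, Matrix.of_apply,
          Sum.elim_inl, Sum.elim_inr, Pi.zero_apply] at h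
        have e : ∑ q : Fin K × Fin m, v (Sum.inr q) * uh ((q.1:ℕ) + s) q.2
            = ∑ k ∈ Finset.range K, (η k) ⬝ᵥ uh (s + k) := by
          rw [Fintype.sum_prod_type,
            ← Fin.sum_univ_eq_sum_range (fun k => (η k) ⬝ᵥ uh (s + k)) K]
          apply Finset.sum_congr rfl
          intro k _
          simp only [dotProduct]
          apply Finset.sum_congr rfl
          intro a _
          have e1 : η (k:ℕ) a = v (Sum.inr (k, a)) := by
            rw [hηdef]
            simp only [k.isLt, dite_true, Fin.eta]
          have e2 : s + (k:ℕ) = (k:ℕ) + s := by omega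
          rw [e1, e2]
        rw [← e]
        convert h using 2
        rfl
      obtain ⟨hξ0, hη0⟩ := aux_pe_kernel A B hctrb uh xh
        (fun i hi => (htraj i hi).1) hdepth hPE ξ η hηz hrel
      funext p
      cases p with
      | inl i => exact congrFun hξ0 i
      | inr q =>
        have h := hη0 (q.1:ℕ) q.2
        rw [hηdef] at h
        simpa only [q.1.isLt, dite_true, Fin.eta, Pi.zero_apply] using h
    obtain ⟨g, hg⟩ := aux_surj _ hker
      (Sum.elim (fun i => x 0 i) (fun q : Fin K × Fin m => u (q.1:ℕ) q.2))
    have hgx : ∀ i, (∑ j, g j * xh ((j:ℕ)) i) = x 0 i := by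
      intro i
      have h := congrFun hg (Sum.inl i)
      simp only [Matrix.mulVec, dotProduct, Matrix.of_apply, Sum.elim_inl] at h
      rw [← h]
      exact Finset.sum_congr rfl fun j _ => by ring
    have hgu : ∀ (k : Fin K) (a : Fin m), (∑ j, g j * uh ((k:ℕ)+(j:ℕ)) a) = u (k:ℕ) a := by
      intro k a
      have h := congrFun hg (Sum.inr (k, a))
      simp only [Matrix.mulVec, dotProduct, Matrix.of_apply, Sum.elim_inr] at h
      rw [← h]
      exact Finset.sum_congr rfl fun j _ => by ring
    have huniq : ∀ k, k ≤ K → (fun i => ∑ j, g j * xh (k+(j:ℕ)) i) = x k := by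
      intro k
      induction k with
      | zero => intro _; funext i; simpa using hgx i
      | succ k ih =>
        intro hk
        have hkK : k < K := hk
        have hu : (fun a => ∑ j, g j * uh (k+(j:ℕ)) a) = u k :=
          funext fun a => hgu ⟨k, hkK⟩ a
        rw [hcombx g k hkK, hu, ih hkK.le]
        exact ((hx k hkK).1).symm
    refine ⟨g, ?_⟩
    funext p
    cases p with
    | inl q =>
      have h := hgu q.1 q.2
      show (stackedHankel K N uh yh).mulVec g (Sum.inl q) = u (q.1:ℕ) q.2
      simp only [stackedHankel, Matrix.mulVec, dotProduct, Matrix.of_apply, Sum.elim_inl]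
      rw [← h]
      exact Finset.sum_congr rfl fun j _ => by ring
    | inr q =>
      have hkK : (q.1:ℕ) < K := q.1.isLt
      have hu : (fun a => ∑ j, g j * uh ((q.1:ℕ)+(j:ℕ)) a) = u (q.1:ℕ) :=
        funext fun a => hgu q.1 a
      have hyy := hcomby g (q.1:ℕ) hkK
      rw [huniq (q.1:ℕ) hkK.le, hu, ← (hx (q.1:ℕ) hkK).2] at hyy
      have h := congrFun hyy q.2
      show (stackedHankel K N uh yh).mulVec g (Sum.inr q) = y (q.1:ℕ) q.2
      simp only [stackedHankel, Matrix.mulVec, dotProduct, Matrix.of_apply, Sum.elim_inr]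
      rw [← h]
      exact Finset.sum_congr rfl fun j _ => by ring
  · rintro ⟨g, hg⟩
    refine ⟨fun k => fun i => ∑ j, g j * xh (k+(j:ℕ)) i, ?_⟩
    intro k hk
    have hu : (fun a => ∑ j, g j * uh (k+(j:ℕ)) a) = u k := by
      funext a
      have h := congrFun hg (Sum.inl (⟨k, hk⟩, a))
      simp only [stackedHankel, Matrix.mulVec, dotProduct, Matrix.of_apply, Sum.elim_inl] at h
      rw [← h]
      exact Finset.sum_congr rfl fun j _ => by ring
    have hy : (fun b => ∑ j, g j * yh (k+(j:ℕ)) b) = y k := by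
      funext b
      have h := congrFun hg (Sum.inr (⟨k, hk⟩, b))
      simp only [stackedHankel, Matrix.mulVec, dotProduct, Matrix.of_apply, Sum.elim_inr] at h
      rw [← h]
      exact Finset.sum_congr rfl fun j _ => by ring
    constructor
    · rw [← hu]
      exact hcombx g k hk
    · rw [← hu, ← hy]
      exact hcomby g k hk
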